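/- With the notation of the avoidance counting problem, for n ≥ k and 1 ≤ d ≤ l one has A(n,d) = ∑_{j=0}^{d} (-1)^j j! C(m,j) C(d,j) f(n-j), where f(n) is the number of permutations of S_n avoiding σ^a P_{l,m}. -/

import Mathlib

open Finset Equiv

/-- `π` contains the pattern `τ`: some increasing subsequence of `π` is
order-isomorphic to `τ`. -/
def PContains {k n : ℕ} (τ : Equiv.Perm (Fin k)) (π : Equiv.Perm (Fin n)) : Prop :=
  ∃ f : Fin k ↪o Fin n, ∀ i j : Fin k, τ i < τ j ↔ π (f i) < π (f j)

/-- `π` avoids every pattern in `T`. -/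
def PAvoids {k n : ℕ} (π : Equiv.Perm (Fin n)) (T : Set (Equiv.Perm (Fin k))) : Prop :=
  ∀ τ ∈ T, ¬ PContains τ π

/-- The coset `σ^a P_{l,m}` of the maximal parabolic subgroup of `S_k` (`k = l+m`):
`τ ∈ σ^a P_{l,m}` iff the first `l` (1-based) values of `τ` are a permutation of
`{a+1, ..., a+l}` taken modulo `k` (in 0-based terms: `(τ j - a) mod k < l`). -/
def sigmaP (k l a : ℕ) : Set (Equiv.Perm (Fin k)) :=
  {τ | ∀ j : Fin k, (j : ℕ) < l → ((τ j : ℕ) + k - a) % k < l}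

/-- The number of permutations of `S_n` avoiding every pattern in `T ⊆ S_k`. -/
noncomputable def avoidersCard (k : ℕ) (T : Set (Equiv.Perm (Fin k))) (n : ℕ) : ℕ :=
  {π : Equiv.Perm (Fin n) | PAvoids π T}.ncard

/-- `g_n(i_1,...,i_d)`: the number of permutations in `S_n` avoiding `σ^a P_{l,m}`
whose value at (1-based) position `p` equals `i p` for `1 ≤ p ≤ d` (values 1-based). -/
noncomputable def gCount (l m a n d : ℕ) (i : ℕ → ℕ) : ℕ :=
  {π : Equiv.Perm (Fin n) | PAvoids π (sigmaP (l + m) l a) ∧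
    ∀ j : Fin n, (j : ℕ) < d → (π j : ℕ) + 1 = i ((j : ℕ) + 1)}.ncard

/-- `A(n,d) = ∑ g_n(i_1,...,i_d)` over all `a+1 ≤ i_1, ..., i_d ≤ b` with `b = n-m+a`. -/
noncomputable def ACount (l m a n d : ℕ) : ℕ :=
  ∑ iv ∈ Fintype.piFinset (fun _ : Fin d => Finset.Icc (a + 1) (n - m + a)),
    gCount l m a n d (fun p => if h : p - 1 < d then iv ⟨p - 1, h⟩ else 0)

/-! ### Auxiliary material -/

section Aux

open scoped Classical

lemma strictMono_le_apply {k N : ℕ} {f : Fin k → Fin N} (hf : StrictMono f) (i : Fin k) :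
    (i : ℕ) ≤ (f i : ℕ) := by
  obtain ⟨i, hi⟩ := i
  induction i with
  | zero => simp
  | succ j ih =>
    have h' : j < k := by omega
    have h1 := ih h'
    have h2 := hf (show (⟨j, h'⟩ : Fin k) < ⟨j + 1, hi⟩ by simp [Fin.lt_def])
    rw [Fin.lt_def] at h2
    simp only [Fin.val_mk] at h1 h2 ⊢
    omega

lemma succAbove_coe {n : ℕ} (p : Fin (n + 1)) (x : Fin n) :
    ((x : ℕ) < (p : ℕ) ∧ ((p.succAbove x : ℕ)) = (x : ℕ)) ∨
      ((p : ℕ) ≤ (x : ℕ) ∧ (p.succAbove x : ℕ) = (x : ℕ) + 1) := by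
  rcases lt_or_ge (Fin.castSucc x) p with h | h
  · left
    rw [Fin.succAbove_of_castSucc_lt _ _ h]
    exact ⟨by simpa [Fin.lt_def] using h, rfl⟩
  · right
    rw [Fin.succAbove_of_le_castSucc _ _ h]
    exact ⟨by simpa [Fin.le_def] using h, rfl⟩

lemma coe_le_succAbove {n : ℕ} (p : Fin (n + 1)) (x : Fin n) :
    (x : ℕ) ≤ (p.succAbove x : ℕ) := by
  rcases succAbove_coe p x with ⟨_, h⟩ | ⟨_, h⟩ <;> omega

/-- the rank of `τ i` from below。 -/
lemma card_filter_lt_perm {k : ℕ} (τ : Perm (Fin k)) (c : Fin k) :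
    (univ.filter fun j => τ j < τ c).card = (τ c : ℕ) := by
  have himg : (univ.filter fun j => τ j < τ c).image τ = Finset.Iio (τ c) := by
    ext y
    simp only [mem_image, mem_filter, mem_univ, true_and, mem_Iio]
    constructor
    · rintro ⟨j, hj, rfl⟩; exact hj
    · intro hy; exact ⟨τ.symm y, by simpa using hy, by simp⟩
  have := Finset.card_image_of_injective (univ.filter fun j => τ j < τ c) τ.injective
  rw [himg] at this
  rw [← this, Fin.card_Iio]

lemma card_filter_gt_perm {k : ℕ} (τ : Perm (Fin k)) (c : Fin k) :
    (univ.filter fun j => τ c < τ j).card = k - 1 - (τ c : ℕ) := by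
  have himg : (univ.filter fun j => τ c < τ j).image τ = Finset.Ioi (τ c) := by
    ext y
    simp only [mem_image, mem_filter, mem_univ, true_and, mem_Ioi]
    constructor
    · rintro ⟨j, hj, rfl⟩; exact hj
    · intro hy; exact ⟨τ.symm y, by simpa using hy, by simp⟩
  have := Finset.card_image_of_injective (univ.filter fun j => τ c < τ j) τ.injective
  rw [himg] at this
  rw [← this, Fin.card_Ioi]

/-- membership in `sigmaP` unfolded arithmetically -/
lemma sigmaP_mem_bounds {l m a : ℕ} (hl : 1 ≤ l) (ha : a ≤ m)
    {τ : Perm (Fin (l + m))} (hτ : τ ∈ sigmaP (l + m) l a) {i : Fin (l + m)}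
    (hi : (i : ℕ) < l) : a ≤ (τ i : ℕ) ∧ (τ i : ℕ) < a + l := by
  have h := hτ i hi
  have hk : (τ i : ℕ) < l + m := (τ i).isLt
  rcases le_or_gt a (τ i : ℕ) with h1 | h1
  · rw [show (τ i : ℕ) + (l + m) - a = ((τ i : ℕ) - a) + (l + m) by omega,
      Nat.add_mod_right, Nat.mod_eq_of_lt (show (τ i : ℕ) - a < l + m by omega)] at h
    omega
  · exfalso
    have : ((τ i : ℕ) + (l + m) - a) % (l + m) = (τ i : ℕ) + (l + m) - a := by
      apply Nat.mod_eq_of_lt; omega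
    rw [this] at h
    omega

end Aux

/-! ### Deletion and insertion of a point in a permutation -/

section DelIns

variable {n : ℕ} (p v : Fin (n + 1))

/-- Insert the pair `(p, v)` into a permutation of `Fin n`. -/
def insPerm (π' : Perm (Fin n)) : Perm (Fin (n + 1)) :=
  ((finSuccEquiv' p).trans (Equiv.optionCongr π')).trans (finSuccEquiv' v).symm

/-- Delete the point `p` (with value `π p`) from a permutation of `Fin (n+1)`. -/
def delPerm (π : Perm (Fin (n + 1))) : Perm (Fin n) :=
  Equiv.removeNone (((finSuccEquiv' p).symm.trans π).trans (finSuccEquiv' v))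

@[simp] lemma insPerm_apply_self (π' : Perm (Fin n)) : insPerm p v π' p = v := by
  simp [insPerm, finSuccEquiv'_at, finSuccEquiv'_symm_none]

@[simp] lemma insPerm_apply_succAbove (π' : Perm (Fin n)) (x : Fin n) :
    insPerm p v π' (p.succAbove x) = v.succAbove (π' x) := by
  simp [insPerm, finSuccEquiv'_succAbove, finSuccEquiv'_symm_some]

lemma succAbove_delPerm {π : Perm (Fin (n + 1))} (hπ : π p = v) (x : Fin n) :
    v.succAbove (delPerm p v π x) = π (p.succAbove x) := by
  have hne : π (p.succAbove x) ≠ v := by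
    rw [← hπ]; exact fun h => Fin.succAbove_ne p x (π.injective h)
  set e := (((finSuccEquiv' p).symm.trans π).trans (finSuccEquiv' v)) with he
  have hsome : ∃ y, e (some x) = some y := by
    simp only [he, Equiv.trans_apply, finSuccEquiv'_symm_some]
    rcases Fin.exists_succAbove_eq hne with ⟨y, hy⟩
    exact ⟨y, by rw [← hy, finSuccEquiv'_succAbove]⟩
  have h1 : some (Equiv.removeNone e x) = e (some x) := Equiv.removeNone_some e hsome
  have h2 : e (some x) = finSuccEquiv' v (π (p.succAbove x)) := by
    simp [he, Equiv.trans_apply, finSuccEquiv'_symm_some]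
  rw [h2] at h1
  have := congrArg (finSuccEquiv' v).symm h1
  rw [show delPerm p v π = Equiv.removeNone e from rfl]
  simpa [finSuccEquiv'_symm_some] using this

lemma insPerm_delPerm {π : Perm (Fin (n + 1))} (hπ : π p = v) :
    insPerm p v (delPerm p v π) = π := by
  apply Equiv.ext
  intro y
  rcases eq_or_ne y p with rfl | hy
  · simp [hπ]
  · rcases Fin.exists_succAbove_eq hy with ⟨x, rfl⟩
    rw [insPerm_apply_succAbove, succAbove_delPerm p v hπ]

lemma delPerm_insPerm (π' : Perm (Fin n)) : delPerm p v (insPerm p v π') = π' := by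
  apply Equiv.ext
  intro x
  have h := succAbove_delPerm p v (insPerm_apply_self p v π') x
  rw [insPerm_apply_succAbove] at h
  exact (Fin.succAbove_right_injective (p := v)) h

lemma insPerm_injective : Function.Injective (insPerm p v) := by
  intro a b h
  have := congrArg (delPerm p v) h
  simpa [delPerm_insPerm] using this

end DelIns

/-! ### Avoidance transfer under deletion/insertion -/

section Transfer

variable {k n : ℕ} {T : Set (Perm (Fin k))}

lemma PAvoids_delPerm {p v : Fin (n + 1)} {π : Perm (Fin (n + 1))} (hπ : π p = v)
    (hav : PAvoids π T) : PAvoids (delPerm p v π) T := by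
  intro τ hτ ⟨f, hf⟩
  refine hav τ hτ ⟨f.trans p.succAboveOrderEmb, fun i j => ?_⟩
  have hi := succAbove_delPerm p v hπ (f i)
  have hj := succAbove_delPerm p v hπ (f j)
  rw [hf i j]
  show delPerm p v π (f i) < delPerm p v π (f j) ↔
    π (p.succAboveOrderEmb (f i)) < π (p.succAboveOrderEmb (f j))
  rw [show p.succAboveOrderEmb (f i) = p.succAbove (f i) from rfl,
    show p.succAboveOrderEmb (f j) = p.succAbove (f j) from rfl, ← hi, ← hj]
  exact (Fin.strictMono_succAbove v).lt_iff_lt.symm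

lemma PAvoids_insPerm {l m a : ℕ} (hl : 1 ≤ l) (ha : a ≤ m)
    {p v : Fin (n + 1)} (hp : (p : ℕ) < l)
    (hv : (v : ℕ) < a ∨ (n + 1) - m + a ≤ (v : ℕ))
    {π' : Perm (Fin n)} (hav : PAvoids π' (sigmaP (l + m) l a)) :
    PAvoids (insPerm p v π') (sigmaP (l + m) l a) := by
  classical
  intro τ hτ ⟨f, hf⟩
  set π := insPerm p v π' with hπdef
  by_cases hmiss : ∀ i, f i ≠ p
  · -- pattern misses the new point: transfer it down
    have hex : ∀ i : Fin (l + m), ∃ x : Fin n, p.succAbove x = f i := fun i =>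
      Fin.exists_succAbove_eq (hmiss i)
    choose g hg using hex
    have hgmono : StrictMono g := by
      intro i j hij
      have := f.strictMono hij
      rw [← hg i, ← hg j] at this
      exact (Fin.strictMono_succAbove p).lt_iff_lt.mp this
    refine hav τ hτ ⟨OrderEmbedding.ofStrictMono g hgmono, fun i j => ?_⟩
    have hi : π (f i) = v.succAbove (π' (g i)) := by rw [← hg i, insPerm_apply_succAbove]
    have hj : π (f j) = v.succAbove (π' (g j)) := by rw [← hg j, insPerm_apply_succAbove]
    rw [hf i j, hi, hj]
    show v.succAbove (π' (g i)) < v.succAbove (π' (g j)) ↔ π' (g i) < π' (g j)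
    exact (Fin.strictMono_succAbove v).lt_iff_lt
  · -- pattern uses the new point: contradiction with `v` being extreme
    push_neg at hmiss
    obtain ⟨i, hip⟩ := hmiss
    have hpv : π p = v := by rw [hπdef]; exact insPerm_apply_self p v π'
    have hik : (i : ℕ) < l := by
      have := strictMono_le_apply f.strictMono i
      rw [hip] at this
      omega
    obtain ⟨hlo, hhi⟩ := sigmaP_mem_bounds hl ha hτ hik
    -- rank of τ i equals rank of π (f i) = v among the pattern values
    have hrank : (univ.filter fun j => τ j < τ i).card = (τ i : ℕ) := card_filter_lt_perm τ i
    have hrank' : (univ.filter fun j => τ i < τ j).card = (l + m) - 1 - (τ i : ℕ) :=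
      card_filter_gt_perm τ i
    have hcongr : ∀ j j' : Fin (l + m), τ j < τ j' ↔ π (f j) < π (f j') := hf
    rcases hv with hv | hv
    · -- v is small: fewer than a values below it, but rank ≥ a
      have hinj : Set.InjOn (fun j => π (f j)) (univ.filter fun j => τ j < τ i) := by
        intro x _ y _ hxy
        exact f.injective (π.injective hxy)
      have hsub : ∀ j ∈ (univ.filter fun j => τ j < τ i),
          (fun j => π (f j)) j ∈ Finset.Iio v := by
        intro j hj
        simp only [mem_filter, mem_univ, true_and] at hj
        rw [hcongr j i, hip, hpv] at hj
        simpa using hj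
      have hle := Finset.card_le_card_of_injOn _ hsub hinj
      rw [hrank, Fin.card_Iio] at hle
      omega
    · -- v is large: fewer than m - a values above it, but corank ≥ m - a
      have hinj : Set.InjOn (fun j => π (f j)) (univ.filter fun j => τ i < τ j) := by
        intro x _ y _ hxy
        exact f.injective (π.injective hxy)
      have hsub : ∀ j ∈ (univ.filter fun j => τ i < τ j),
          (fun j => π (f j)) j ∈ Finset.Ioi v := by
        intro j hj
        simp only [mem_filter, mem_univ, true_and] at hj
        rw [hcongr i j, hip, hpv] at hj
        simpa using hj
      have hle := Finset.card_le_card_of_injOn _ hsub hinj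
      rw [hrank', Fin.card_Ioi] at hle
      have hvlt : (v : ℕ) < n + 1 := v.isLt
      omega

end Transfer


/-! ### The core counting lemma -/

section Counting

open scoped Classical

lemma ncard_setOf_eq_card_filter {α : Type*} [Fintype α] (P : α → Prop) [DecidablePred P] :
    {x | P x}.ncard = (Finset.univ.filter P).card := by
  rw [Set.ncard_eq_toFinset_card']
  congr 1
  ext x
  simp

lemma countW (l m a : ℕ) (hl : 1 ≤ l) (ha : a ≤ m) :
    ∀ (j n : ℕ), m + j ≤ n → ∀ (W : Finset (Fin n)),
    (∀ w ∈ W, (w : ℕ) < a ∨ n - m + a ≤ (w : ℕ)) →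
    ∀ (ps : Fin j → Fin n), Function.Injective ps → (∀ i, (ps i : ℕ) < l) →
    {π : Perm (Fin n) | PAvoids π (sigmaP (l + m) l a) ∧ ∀ i, π (ps i) ∈ W}.ncard
      = W.card.descFactorial j * avoidersCard (l + m) (sigmaP (l + m) l a) (n - j) := by
  intro j
  induction j with
  | zero =>
    intro n hmn W hW ps hinj hpl
    simp only [IsEmpty.forall_iff, and_true, Nat.descFactorial_zero, one_mul, Nat.sub_zero]
    rfl
  | succ j IH =>
    intro n hmn W hW ps hinj hpl
    obtain ⟨n', rfl⟩ : ∃ n', n = n' + 1 := ⟨n - 1, by omega⟩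
    set T := sigmaP (l + m) l a with hT
    set p := ps 0 with hp
    rw [ncard_setOf_eq_card_filter]
    set S : Finset (Perm (Fin (n' + 1))) :=
      univ.filter (fun π => PAvoids π T ∧ ∀ i, π (ps i) ∈ W) with hS
    have hmap : ∀ π ∈ S, π (ps 0) ∈ W := by
      intro π hπ
      simp only [hS, mem_filter] at hπ
      exact hπ.2.2 0
    rw [Finset.card_eq_sum_card_fiberwise hmap]
    -- now handle each fiber
    have hfiber : ∀ v ∈ W, (S.filter fun π => π (ps 0) = v).card
        = (W.card - 1).descFactorial j * avoidersCard (l + m) T (n' - j) := by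
      intro v hv
      have hps_ne : ∀ i : Fin j, ps i.succ ≠ p := by
        intro i h
        exact (Fin.succ_ne_zero i) (hinj h)
      have hex : ∀ i : Fin j, ∃ x : Fin n', p.succAbove x = ps i.succ := fun i =>
        Fin.exists_succAbove_eq (hps_ne i)
      choose ps' hps' using hex
      set W' : Finset (Fin n') := univ.filter (fun w₀ => v.succAbove w₀ ∈ W.erase v) with hW'
      -- bijection with the smaller problem
      have hbij : (S.filter fun π => π (ps 0) = v).card
          = (univ.filter (fun π' : Perm (Fin n') => PAvoids π' T ∧ ∀ i, π' (ps' i) ∈ W')).card := by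
        apply Finset.card_bij' (fun π _ => delPerm p v π) (fun π' _ => insPerm p v π')
        · -- maps into
          intro π hπ
          simp only [hS, mem_filter, mem_univ, true_and] at hπ
          obtain ⟨⟨hav, hcon⟩, hpv⟩ := hπ
          simp only [mem_filter, mem_univ, true_and]
          refine ⟨PAvoids_delPerm hpv hav, fun i => ?_⟩
          simp only [hW', mem_filter, mem_univ, true_and]
          rw [succAbove_delPerm p v hpv (ps' i), hps' i]
          refine Finset.mem_erase.2 ⟨fun h => ?_, hcon i.succ⟩
          exact hps_ne i (π.injective (h.trans hpv.symm))
        · -- maps back into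
          intro π' hπ'
          simp only [mem_filter, mem_univ, true_and] at hπ'
          obtain ⟨hav, hcon⟩ := hπ'
          simp only [hS, mem_filter, mem_univ, true_and]
          have hbad : (v : ℕ) < a ∨ (n' + 1) - m + a ≤ (v : ℕ) := hW v hv
          refine ⟨⟨PAvoids_insPerm hl ha (hpl 0) hbad hav, fun i => ?_⟩,
            insPerm_apply_self p v π'⟩
          induction i using Fin.cases with
          | zero => rw [show ps 0 = p from rfl, insPerm_apply_self p v π']; exact hv
          | succ i =>
            rw [← hps' i, insPerm_apply_succAbove]
            have := hcon i
            simp only [hW', mem_filter, mem_univ, true_and] at this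
            exact Finset.mem_of_mem_erase this
        · intro π hπ
          simp only [hS, mem_filter] at hπ
          exact insPerm_delPerm p v hπ.2
        · intro π' _
          exact delPerm_insPerm p v π'
      rw [hbij, ← ncard_setOf_eq_card_filter]
      -- apply the induction hypothesis
      have hW'card : W'.card = W.card - 1 := by
        have himg : W'.image v.succAbove = W.erase v := by
          ext y
          simp only [hW', mem_image, mem_filter, mem_univ, true_and]
          constructor
          · rintro ⟨w₀, hw₀, rfl⟩; exact hw₀
          · intro hy
            obtain ⟨w₀, hw₀⟩ := Fin.exists_succAbove_eq (Finset.ne_of_mem_erase hy)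
            exact ⟨w₀, by rw [hw₀]; exact hy, hw₀⟩
        have := Finset.card_image_of_injective W' (Fin.succAbove_right_injective (p := v))
        rw [himg, Finset.card_erase_of_mem hv] at this
        omega
      have hW'bad : ∀ w₀ ∈ W', (w₀ : ℕ) < a ∨ n' - m + a ≤ (w₀ : ℕ) := by
        intro w₀ hw₀
        simp only [hW', mem_filter, mem_univ, true_and] at hw₀
        have h1 := hW _ (Finset.mem_of_mem_erase hw₀)
        have h2 : (v.succAbove w₀ : ℕ) ≠ (v : ℕ) :=
          fun h => Finset.ne_of_mem_erase hw₀ (Fin.val_injective h)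
        have h3 := hW v hv
        rcases succAbove_coe v w₀ with ⟨h4, h5⟩ | ⟨h4, h5⟩ <;> omega
      have hinj' : Function.Injective ps' := by
        intro x y h
        have : ps x.succ = ps y.succ := by rw [← hps' x, ← hps' y, h]
        have := hinj this
        exact Fin.succ_injective _ this
      have hpl' : ∀ i, (ps' i : ℕ) < l := by
        intro i
        have := coe_le_succAbove p (ps' i)
        rw [hps' i] at this
        exact lt_of_le_of_lt this (hpl i.succ)
      have := IH n' (by omega) W' hW'bad ps' hinj' hpl'
      rw [this, hW'card]
    rw [Finset.sum_congr rfl hfiber, Finset.sum_const, smul_eq_mul]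
    rcases Nat.eq_zero_or_pos W.card with h0 | hpos
    · rw [h0]
      simp [Nat.zero_descFactorial_succ, Finset.card_eq_zero.mp h0]
    · obtain ⟨c, hc⟩ : ∃ c, W.card = c + 1 := ⟨W.card - 1, by omega⟩
      rw [hc, Nat.succ_descFactorial_succ, Nat.add_sub_cancel,
        show n' + 1 - (j + 1) = n' - j by omega]
      ring

/-! ### Final assembly -/

section Final

open scoped Classical

lemma card_badSet {n m a : ℕ} (ha : a ≤ m) (hmn : m ≤ n) :
    (univ.filter fun v : Fin n => (v : ℕ) < a ∨ n - m + a ≤ (v : ℕ)).card = m := by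
  have himg : (univ.filter fun v : Fin n => (v : ℕ) < a ∨ n - m + a ≤ (v : ℕ)).image Fin.val
      = (Finset.range n).filter (fun x => x < a ∨ n - m + a ≤ x) := by
    ext y
    simp only [mem_image, mem_filter, mem_univ, true_and, mem_range]
    constructor
    · rintro ⟨v, hv, rfl⟩; exact ⟨v.isLt, hv⟩
    · rintro ⟨hy, hP⟩; exact ⟨⟨y, hy⟩, hP, rfl⟩
  have h2 := Finset.card_image_of_injective
    (univ.filter fun v : Fin n => (v : ℕ) < a ∨ n - m + a ≤ (v : ℕ)) Fin.val_injective
  rw [himg] at h2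
  rw [← h2]
  have hsplit : (Finset.range n).filter (fun x => x < a ∨ n - m + a ≤ x)
      = Finset.range a ∪ Finset.Ico (n - m + a) n := by
    ext x
    simp only [mem_filter, mem_range, mem_union, mem_Ico]
    omega
  rw [hsplit, Finset.card_union_of_disjoint, Finset.card_range, Nat.card_Ico]
  · omega
  · rw [Finset.disjoint_left]
    intro x hx hx'
    simp only [mem_range] at hx
    simp only [mem_Ico] at hx'
    omega

lemma ACount_eq_good (l m a n d : ℕ) (hd : d ≤ n) :
    ACount l m a n d = (univ.filter fun π : Perm (Fin n) =>
      PAvoids π (sigmaP (l + m) l a) ∧ ∀ q : Fin d,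
        a ≤ (π (Fin.castLE hd q) : ℕ) ∧ (π (Fin.castLE hd q) : ℕ) < n - m + a).card := by
  rw [ACount]
  have hmap : ∀ π ∈ (univ.filter fun π : Perm (Fin n) =>
      PAvoids π (sigmaP (l + m) l a) ∧ ∀ q : Fin d,
        a ≤ (π (Fin.castLE hd q) : ℕ) ∧ (π (Fin.castLE hd q) : ℕ) < n - m + a),
      (fun q : Fin d => (π (Fin.castLE hd q) : ℕ) + 1)
        ∈ Fintype.piFinset (fun _ : Fin d => Finset.Icc (a + 1) (n - m + a)) := by
    intro π hπ
    rw [mem_filter] at hπ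
    rw [Fintype.mem_piFinset]
    intro q
    rw [Finset.mem_Icc]
    have := hπ.2.2 q
    omega
  rw [Finset.card_eq_sum_card_fiberwise hmap]
  apply Finset.sum_congr rfl
  intro iv hiv
  rw [Fintype.mem_piFinset] at hiv
  rw [gCount, ncard_setOf_eq_card_filter]
  congr 1
  ext π
  simp only [mem_filter, mem_univ, true_and]
  constructor
  · rintro ⟨hav, hval⟩
    have hgood : ∀ q : Fin d,
        a ≤ (π (Fin.castLE hd q) : ℕ) ∧ (π (Fin.castLE hd q) : ℕ) < n - m + a := by
      intro q
      have h1 := hval (Fin.castLE hd q) (by simpa using q.isLt)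
      simp only [Fin.coe_castLE] at h1
      rw [dif_pos (show (q : ℕ) + 1 - 1 < d by simpa using q.isLt)] at h1
      have h2 := hiv ⟨(q : ℕ) + 1 - 1, by simpa using q.isLt⟩
      rw [Finset.mem_Icc] at h2
      rw [← h1] at h2
      omega
    refine ⟨⟨hav, hgood⟩, ?_⟩
    funext q
    have h1 := hval (Fin.castLE hd q) (by simpa using q.isLt)
    simp only [Fin.coe_castLE] at h1
    rw [dif_pos (show (q : ℕ) + 1 - 1 < d by simpa using q.isLt)] at h1
    rw [h1]
    congr 1
  · rintro ⟨⟨hav, _⟩, hfib⟩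
    refine ⟨hav, fun j hj => ?_⟩
    have := congrFun hfib ⟨(j : ℕ), hj⟩
    rw [dif_pos (show (j : ℕ) + 1 - 1 < d by simpa using hj)]
    have hcast : Fin.castLE hd ⟨(j : ℕ), hj⟩ = j := by ext; simp
    rw [hcast] at this
    rw [this]
    congr 1

end Final

section MainProof

open scoped Classical

theorem ACount_formula (l m a n d : ℕ) (hl : 1 ≤ l) (hm : 1 ≤ m)
    (ha : a ≤ m) (hn : l + m ≤ n) (hd : 1 ≤ d) (hdl : d ≤ l) :
    (ACount l m a n d : ℤ)
      = ∑ j ∈ Finset.range (d + 1),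
          (-1 : ℤ) ^ j * (j.factorial : ℤ) * (m.choose j) * (d.choose j) *
            (avoidersCard (l + m) (sigmaP (l + m) l a) (n - j) : ℤ) := by
  have hdn : d ≤ n := by omega
  set T := sigmaP (l + m) l a with hT
  set W : Finset (Fin n) := univ.filter (fun v : Fin n => (v : ℕ) < a ∨ n - m + a ≤ (v : ℕ))
    with hWdef
  have hWcard : W.card = m := card_badSet ha (by omega)
  set Av : Finset (Perm (Fin n)) := univ.filter (fun π => PAvoids π T) with hAv
  -- Step 1/2 : ACount as a sum of products over avoiders
  have step12 : (ACount l m a n d : ℤ)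
      = ∑ π ∈ Av, ∏ q : Fin d,
          ((if π (Fin.castLE hdn q) ∈ W then (-1 : ℤ) else 0) + 1) := by
    have hprod : ∀ π ∈ Av, (∏ q : Fin d,
        ((if π (Fin.castLE hdn q) ∈ W then (-1 : ℤ) else 0) + 1))
        = if (∀ q : Fin d, π (Fin.castLE hdn q) ∉ W) then 1 else 0 := by
      intro π _
      by_cases hall : ∀ q : Fin d, π (Fin.castLE hdn q) ∉ W
      · rw [if_pos hall]
        apply Finset.prod_eq_one
        intro q _
        rw [if_neg (hall q)]
        ring
      · rw [if_neg hall]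
        push_neg at hall
        obtain ⟨q, hq⟩ := hall
        apply Finset.prod_eq_zero (Finset.mem_univ q)
        rw [if_pos hq]
        ring
    rw [Finset.sum_congr rfl hprod, Finset.sum_boole]
    rw [ACount_eq_good l m a n d hdn]
    congr 2
    have : Av.filter (fun π => ∀ q : Fin d, π (Fin.castLE hdn q) ∉ W)
        = univ.filter fun π : Perm (Fin n) =>
          PAvoids π T ∧ ∀ q : Fin d,
            a ≤ (π (Fin.castLE hdn q) : ℕ) ∧ (π (Fin.castLE hdn q) : ℕ) < n - m + a := by
      ext π
      simp only [hAv, hWdef, Finset.mem_filter, Finset.mem_univ, true_and, and_assoc]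
      constructor
      · rintro ⟨h1, h2⟩
        refine ⟨h1, fun q => ?_⟩
        have := h2 q
        have hlt := (π (Fin.castLE hdn q)).isLt
        omega
      · rintro ⟨h1, h2⟩
        refine ⟨h1, fun q h => ?_⟩
        have := h2 q
        omega
    rw [this]
  rw [step12]
  -- Step 3 : expand the product (inclusion-exclusion)
  have step3 : ∀ π ∈ Av, (∏ q : Fin d,
      ((if π (Fin.castLE hdn q) ∈ W then (-1 : ℤ) else 0) + 1))
      = ∑ t ∈ (univ : Finset (Fin d)).powerset,
          (-1 : ℤ) ^ t.card * (if (∀ q ∈ t, π (Fin.castLE hdn q) ∈ W) then 1 else 0) := by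
    intro π _
    rw [Finset.prod_add]
    apply Finset.sum_congr rfl
    intro t _
    rw [Finset.prod_const_one, mul_one]
    have : ∀ q ∈ t, (if π (Fin.castLE hdn q) ∈ W then (-1 : ℤ) else 0)
        = (-1) * (if π (Fin.castLE hdn q) ∈ W then 1 else 0) := by
      intro q _
      split <;> ring
    rw [Finset.prod_congr rfl this, Finset.prod_mul_distrib, Finset.prod_const,
      Finset.prod_boole]
    congr 1
    by_cases h : ∀ q ∈ t, π (Fin.castLE hdn q) ∈ W
    · rw [if_pos h, if_pos h]
    · rw [if_neg h, if_neg h]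
  rw [Finset.sum_congr rfl step3, Finset.sum_comm]
  -- Step 4 : evaluate each subset's count via `countW`
  have step4 : ∀ t ∈ (univ : Finset (Fin d)).powerset,
      (∑ π ∈ Av, (-1 : ℤ) ^ t.card *
        (if (∀ q ∈ t, π (Fin.castLE hdn q) ∈ W) then 1 else 0))
      = (-1 : ℤ) ^ t.card *
          ((m.descFactorial t.card * avoidersCard (l + m) T (n - t.card) : ℕ) : ℤ) := by
    intro t _
    rw [← Finset.mul_sum, Finset.sum_boole]
    congr 2
    have htd : t.card ≤ d := by
      simpa using Finset.card_le_card (Finset.subset_univ t)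
    set ps : Fin t.card → Fin n := fun i => Fin.castLE hdn (t.orderEmbOfFin rfl i) with hps
    have hinj : Function.Injective ps := by
      intro x y h
      have := Fin.castLE_injective hdn h
      exact (t.orderEmbOfFin rfl).injective this
    have hpl : ∀ i, (ps i : ℕ) < l := by
      intro i
      have : ((t.orderEmbOfFin rfl i : Fin d) : ℕ) < d := (t.orderEmbOfFin rfl i).isLt
      simp only [hps, Fin.coe_castLE]
      omega
    have hWbad : ∀ w ∈ W, (w : ℕ) < a ∨ n - m + a ≤ (w : ℕ) := by
      intro w hw
      simp only [hWdef, Finset.mem_filter] at hw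
      exact hw.2
    have hcount := countW l m a hl ha t.card n (by omega) W hWbad ps hinj hpl
    rw [ncard_setOf_eq_card_filter] at hcount
    rw [show m.descFactorial t.card = W.card.descFactorial t.card by rw [hWcard], ← hcount]
    congr 1
    ext π
    simp only [hAv, Finset.mem_filter, Finset.mem_univ, true_and]
    constructor
    · rintro ⟨h1, h2⟩
      refine ⟨h1, fun i => h2 _ (t.orderEmbOfFin_mem rfl i)⟩
    · rintro ⟨h1, h2⟩
      refine ⟨h1, fun q hq => ?_⟩
      have : q ∈ Set.range (t.orderEmbOfFin rfl) := by
        rw [t.range_orderEmbOfFin rfl]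
        exact hq
      obtain ⟨i, hi⟩ := this
      have := h2 i
      rw [hps] at this
      rw [← hi]
      exact this
  rw [Finset.sum_congr rfl step4]
  -- Step 5 : group subsets by cardinality
  have hps : (univ : Finset (Fin d)).powerset
      = (Finset.range (d + 1)).disjiUnion
          (fun j => Finset.powersetCard j (univ : Finset (Fin d)))
          ((univ : Finset (Fin d)).pairwise_disjoint_powersetCard.set_pairwise _) := by
    have := Finset.powerset_card_disjiUnion (univ : Finset (Fin d))
    simpa only [Finset.card_univ, Fintype.card_fin] using this
  rw [hps]
  refine (Finset.sum_disjiUnion _ _ _).trans ?_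
  apply Finset.sum_congr rfl
  intro j hj
  have hconst : ∀ t ∈ Finset.powersetCard j (univ : Finset (Fin d)),
      (-1 : ℤ) ^ t.card *
          ((m.descFactorial t.card * avoidersCard (l + m) T (n - t.card) : ℕ) : ℤ)
      = (-1 : ℤ) ^ j * ((m.descFactorial j * avoidersCard (l + m) T (n - j) : ℕ) : ℤ) := by
    intro t ht
    rw [Finset.mem_powersetCard_univ] at ht
    rw [ht]
  rw [Finset.sum_congr rfl hconst, Finset.sum_const, Finset.card_powersetCard]
  simp only [Finset.card_univ, Fintype.card_fin, nsmul_eq_mul]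
  rw [Nat.descFactorial_eq_factorial_mul_choose]
  push_cast
  ring

end MainProof
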